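/- arXiv:0906.4591 — 6 statements merged into one kernel-verified Lean document; each statement's English description precedes it below -/
import Mathlib

section
/- For real q > 0 and every natural number n ≥ 1, the sum ∑_{k=0}^{n} (-1)^{n-k} binom(q, n-k) · binom(q+k-1, k) / (q+k+1) equals - q·Γ(n+1)·Γ(q+1) / Γ(q+n+2), where binom(x,k) = Γ(x+1)/(Γ(k+1)Γ(x-k+1)) denotes the generalized binomial coefficient. -/
/-- Generalized binomial coefficient `x (x-1) ⋯ (x-k+1) / k!` for real `x`. -/
noncomputable def gbinom (x : ℝ) (k : ℕ) : ℝ :=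
  (∏ i ∈ Finset.range k, (x - i)) / (Nat.factorial k)

lemma gbinom_zero (x : ℝ) : gbinom x 0 = 1 := by simp [gbinom]

lemma gbinom_succ (x : ℝ) (k : ℕ) :
    gbinom x (k + 1) = gbinom x k * (x - k) / (k + 1) := by
  simp only [gbinom, Finset.prod_range_succ, Nat.factorial_succ]
  rw [div_mul_eq_mul_div, div_div]
  push_cast
  congr 1
  ring

lemma gbinom_shift (q : ℝ) (k : ℕ) :
    gbinom (q + k) (k + 1) = (q + k) * gbinom (q + k - 1) k / (k + 1) := by
  have hp : ∏ i ∈ Finset.range (k+1), (q + (k:ℝ) - i)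
      = (q + k) * ∏ i ∈ Finset.range k, (q + (k:ℝ) - 1 - i) := by
    rw [Finset.prod_range_succ']
    have : ∀ i ∈ Finset.range k, (q + (k:ℝ) - ((i:ℕ) + 1 : ℕ)) = (q + (k:ℝ) - 1 - i) := by
      intro i _; push_cast; ring
    rw [Finset.prod_congr rfl this]
    push_cast; ring
  simp only [gbinom, Nat.factorial_succ]
  rw [hp, mul_div_assoc, mul_div_assoc]
  congr 1
  rw [div_div]
  push_cast
  congr 1
  ring

lemma conv_zero (q : ℝ) (hq : q ≠ 0) (m : ℕ) (hm : 1 ≤ m) :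
    ∑ k ∈ Finset.range (m+1),
      (-1:ℝ)^(m-k) * gbinom q (m-k) * gbinom (q + k - 1) k = 0 := by
  set T : ℕ → ℝ := fun k =>
    -((k:ℝ)*((k:ℝ)+q-(m:ℝ))/(q*(m:ℝ))) *
      ((-1:ℝ)^(m-k) * gbinom q (m-k) * gbinom (q + k - 1) k) with hT
  have hmR : ((m:ℝ)) ≠ 0 := Nat.cast_ne_zero.mpr (by omega)
  have step : ∀ k ∈ Finset.range m,
      (-1:ℝ)^(m-k) * gbinom q (m-k) * gbinom (q + k - 1) k = T (k+1) - T k := by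
    intro k hk
    rw [Finset.mem_range] at hk
    obtain ⟨j, hj⟩ := Nat.exists_eq_add_of_lt hk
    subst hj
    have e1 : k + j + 1 - k = j + 1 := by omega
    have e2 : k + j + 1 - (k + 1) = j := by omega
    simp only [hT, e1, e2]
    have e3 : q + ((k:ℕ)+1 : ℕ) - 1 = q + (k:ℝ) := by push_cast; ring
    rw [e3, gbinom_shift, gbinom_succ q j]
    have hk1 : ((k:ℝ) + 1) ≠ 0 := by positivity
    have hj1 : ((j:ℝ) + 1) ≠ 0 := by positivity
    have hmc : ((k + j + 1 : ℕ) : ℝ) = (k:ℝ) + (j:ℝ) + 1 := by push_cast; ring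
    rw [hmc] at *
    have hmR' : ((k:ℝ) + (j:ℝ) + 1) ≠ 0 := by positivity
    rw [pow_succ]
    push_cast
    field_simp
    ring
  rw [Finset.sum_range_succ, Finset.sum_congr rfl step, Finset.sum_range_sub T]
  have hT0 : T 0 = 0 := by simp [hT]
  have hTm : T m = -(gbinom (q + m - 1) m) := by
    simp only [hT, Nat.sub_self, pow_zero, gbinom_zero]
    field_simp
    ring
  rw [hT0, hTm, Nat.sub_self]
  simp [gbinom_zero]

noncomputable def Scn (q : ℝ) (n : ℕ) : ℝ :=
  ∑ k ∈ Finset.range (n + 1),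
    (-1 : ℝ) ^ (n - k) * gbinom q (n - k) * gbinom (q + k - 1) k / (q + k + 1)

lemma recur (q : ℝ) (hq : 0 < q) (n : ℕ) (hn : 1 ≤ n) :
    (q + (n:ℝ) + 2) * Scn q (n+1) = ((n:ℝ) + 1) * Scn q n := by
  have hden : ∀ k : ℕ, q + (k:ℝ) + 1 ≠ 0 := fun k => by positivity
  have h1 : (q + (n:ℝ) + 2) * Scn q (n+1)
      = ∑ k ∈ Finset.range (n+1+1),
          ((-1:ℝ)^(n+1-k) * gbinom q (n+1-k) * gbinom (q + k - 1) k
            + ((n:ℝ) + 1 - k) *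
              ((-1:ℝ)^(n+1-k) * gbinom q (n+1-k) * gbinom (q + k - 1) k / (q + k + 1))) := by
    rw [Scn, Finset.mul_sum]
    refine Finset.sum_congr rfl (fun k _ => ?_)
    have := hden k
    field_simp
    ring
  rw [h1, Finset.sum_add_distrib, conv_zero q hq.ne' (n+1) (by omega), zero_add,
    Finset.sum_range_succ]
  have hlast : ((n:ℝ) + 1 - ((n+1 : ℕ):ℝ)) *
      ((-1:ℝ)^(n+1-(n+1)) * gbinom q (n+1-(n+1)) * gbinom (q + ((n+1:ℕ):ℝ) - 1) (n+1)
        / (q + ((n+1:ℕ):ℝ) + 1)) = 0 := by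
    push_cast; ring_nf
  rw [hlast, add_zero]
  have h2 : ∀ k ∈ Finset.range (n+1),
      ((n:ℝ) + 1 - k) *
        ((-1:ℝ)^(n+1-k) * gbinom q (n+1-k) * gbinom (q + k - 1) k / (q + k + 1))
      = ((n:ℝ) + 1) *
          ((-1:ℝ)^(n-k) * gbinom q (n-k) * gbinom (q + k - 1) k / (q + k + 1))
        - (-1:ℝ)^(n-k) * gbinom q (n-k) * gbinom (q + k - 1) k := by
    intro k hk
    rw [Finset.mem_range] at hk
    obtain ⟨j, hj⟩ := Nat.exists_eq_add_of_le (by omega : k ≤ n)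
    subst hj
    have e1 : k + j + 1 - k = j + 1 := by omega
    have e2 : k + j - k = j := by omega
    rw [e1, e2, gbinom_succ q j, pow_succ]
    have := hden k
    have hj1 : ((j:ℝ) + 1) ≠ 0 := by positivity
    push_cast
    field_simp
    ring
  rw [Finset.sum_congr rfl h2, Finset.sum_sub_distrib,
    conv_zero q hq.ne' n hn, sub_zero, ← Finset.mul_sum, Scn]

theorem cn_closed_form (q : ℝ) (hq : 0 < q) (n : ℕ) (hn : 1 ≤ n) :
    ∑ k ∈ Finset.range (n + 1),
        (-1 : ℝ) ^ (n - k) * gbinom q (n - k) * gbinom (q + k - 1) k / (q + k + 1)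
      = - q * Real.Gamma (n + 1) * Real.Gamma (q + 1) / Real.Gamma (q + n + 2) := by
  have key : ∀ m : ℕ, 1 ≤ m →
      Scn q m = - q * Real.Gamma (m + 1) * Real.Gamma (q + 1) / Real.Gamma (q + m + 2) := by
    intro m hm
    induction m, hm using Nat.le_induction with
    | base =>
      have hq1 : q + 1 ≠ 0 := by positivity
      have hq2 : q + 2 ≠ 0 := by positivity
      have hG3 : Real.Gamma (q + 1 + 2) = (q + 2) * ((q + 1) * Real.Gamma (q + 1)) := by
        have e : q + 1 + 2 = (q + 2) + 1 := by ring
        rw [e, Real.Gamma_add_one hq2]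
        have e2 : q + 2 = (q + 1) + 1 := by ring
        rw [e2, Real.Gamma_add_one hq1]
      have hGpos : 0 < Real.Gamma (q + 1) := Real.Gamma_pos_of_pos (by positivity)
      rw [Scn]
      simp only [Finset.sum_range_succ, Finset.sum_range_zero]
      norm_num [gbinom, Finset.prod_range_succ]
      rw [hG3]
      field_simp
      ring
    | succ m hm ih =>
      have hrec := recur q hq m hm
      have hd : q + (m:ℝ) + 2 ≠ 0 := by positivity
      have hS : Scn q (m+1) = ((m:ℝ) + 1) * Scn q m / (q + (m:ℝ) + 2) := by
        field_simp at hrec ⊢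
        linarith [hrec]
      rw [hS, ih]
      have hGm : Real.Gamma (((m+1:ℕ)):ℝ) ≠ 0 := by
        have : (0:ℝ) < Real.Gamma ((m+1:ℕ):ℝ) := Real.Gamma_pos_of_pos (by positivity)
        exact this.ne'
      have hGq : 0 < Real.Gamma (q + (m:ℝ) + 2) := Real.Gamma_pos_of_pos (by positivity)
      have e1 : ((((m+1):ℕ)):ℝ) + 1 = ((m:ℝ) + 1) + 1 := by push_cast; ring
      have e2 : Real.Gamma (((m:ℝ) + 1) + 1) = ((m:ℝ) + 1) * Real.Gamma ((m:ℝ) + 1) := by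
        exact Real.Gamma_add_one (by positivity)
      have e3 : q + (((m+1):ℕ):ℝ) + 2 = (q + (m:ℝ) + 2) + 1 := by push_cast; ring
      have e4 : Real.Gamma ((q + (m:ℝ) + 2) + 1) = (q + (m:ℝ) + 2) * Real.Gamma (q + (m:ℝ) + 2) :=
        Real.Gamma_add_one hd
      rw [e1, e2, e3, e4]
      field_simp
  exact key n hn
end

section
/- For any real x > 0 with x ≠ 1 and any natural number k ≥ 0, the finite sum ∑_{j=0}^{k} Γ(x+1)Γ(j+1)/Γ(x+j+1) equals (x/(x-1)) · (1 - Γ(x)Γ(k+2)/Γ(x+k+1)). -/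
theorem gamma_finite_sum (x : ℝ) (hx : 0 < x) (hx1 : x ≠ 1) (k : ℕ) :
    ∑ j ∈ Finset.range (k + 1),
        Real.Gamma (x + 1) * Real.Gamma (j + 1) / Real.Gamma (x + j + 1)
      = x / (x - 1) * (1 - Real.Gamma x * Real.Gamma (k + 2) / Real.Gamma (x + k + 1)) := by
  have hx' : x - 1 ≠ 0 := sub_ne_zero.mpr hx1
  induction k with
  | zero =>
      have hΓx : Real.Gamma x > 0 := Real.Gamma_pos_of_pos hx
      have h1 : Real.Gamma (x + 1) = x * Real.Gamma x := Real.Gamma_add_one hx.ne'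
      simp only [Finset.range_one, Finset.sum_singleton, Nat.cast_zero]
      norm_num [Real.Gamma_one, Real.Gamma_two, h1]
      field_simp
  | succ n ih =>
      have hpos : (0:ℝ) < x + n + 1 := by positivity
      have hΓx : (0:ℝ) < Real.Gamma x := Real.Gamma_pos_of_pos hx
      have hΓ1 : (0:ℝ) < Real.Gamma (x + n + 1) := Real.Gamma_pos_of_pos hpos
      have hrec : Real.Gamma (x + (n+1) + 1) = (x + n + 1) * Real.Gamma (x + n + 1) := by
        have := Real.Gamma_add_one hpos.ne'
        rw [← this]; ring_nf
      have hrec2 : Real.Gamma ((n:ℝ) + 1 + 2) = ((n:ℝ) + 2) * Real.Gamma ((n:ℝ) + 2) := by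
        have h2 : (0:ℝ) < (n:ℝ) + 2 := by positivity
        have := Real.Gamma_add_one h2.ne'
        rw [← this]; ring_nf
      have hΓx1 : Real.Gamma (x + 1) = x * Real.Gamma x := Real.Gamma_add_one hx.ne'
      rw [Finset.sum_range_succ, ih]
      push_cast
      rw [hrec, hrec2, hΓx1]
      field_simp
      ring
end

section
/- For any real x > 1, the infinite series ∑_{j=0}^{∞} Γ(x+1)Γ(j+1)/Γ(x+j+1) converges and its sum equals x/(x-1). -/
open Filter Finset Real Topology Nat

private lemma gamma_add_nat_eq (x : ℝ) (hx : 0 < x) (n : ℕ) :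
    Real.Gamma (x + n) = Real.Gamma x * ∏ j ∈ Finset.range n, (x + j) := by
  induction n with
  | zero => simp
  | succ n ih =>
    have hne : x + n ≠ 0 := by positivity
    have : (x : ℝ) + (n + 1 : ℕ) = (x + n) + 1 := by push_cast; ring
    rw [this, Real.Gamma_add_one hne, ih, Finset.prod_range_succ]
    ring

theorem gamma_series_sum (x : ℝ) (hx : 1 < x) :
    HasSum (fun j : ℕ => Real.Gamma (x + 1) * Real.Gamma (j + 1) / Real.Gamma (x + j + 1))
      (x / (x - 1)) := by
  have hx0 : 0 < x := by linarith
  have hx1 : x - 1 ≠ 0 := sub_ne_zero.mpr hx.ne'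
  have hΓx : 0 < Real.Gamma x := Real.Gamma_pos_of_pos hx0
  set c : ℕ → ℝ := fun n => Real.Gamma (x + 1) * (n ! : ℝ) / ((x - 1) * Real.Gamma (x + n)) with hc
  -- nonnegativity of terms
  have hnn : ∀ j : ℕ, 0 ≤ Real.Gamma (x + 1) * Real.Gamma (j + 1) / Real.Gamma (x + j + 1) := by
    intro j
    have h1 : 0 < Real.Gamma (x + 1) := Real.Gamma_pos_of_pos (by linarith)
    have h2 : 0 < Real.Gamma ((j : ℝ) + 1) := Real.Gamma_pos_of_pos (by positivity)
    have h3 : 0 < Real.Gamma (x + j + 1) := Real.Gamma_pos_of_pos (by positivity)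
    positivity
  rw [hasSum_iff_tendsto_nat_of_nonneg hnn]
  -- telescoping identity
  have hterm : ∀ j : ℕ,
      Real.Gamma (x + 1) * Real.Gamma (j + 1) / Real.Gamma (x + j + 1) = c j - c (j + 1) := by
    intro j
    have hΓj : Real.Gamma ((j : ℝ) + 1) = (j ! : ℝ) := Real.Gamma_nat_eq_factorial j
    have hne : x + j ≠ 0 := by positivity
    have hrec : Real.Gamma (x + j + 1) = (x + j) * Real.Gamma (x + j) :=
      Real.Gamma_add_one hne
    have hΓxj : Real.Gamma (x + j) ≠ 0 := (Real.Gamma_pos_of_pos (by positivity)).ne'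
    have hcast : (x : ℝ) + ((j : ℕ) + 1 : ℕ) = x + j + 1 := by push_cast; ring
    simp only [hc, hcast, hΓj, hrec, Nat.factorial_succ]
    field_simp
    push_cast
    ring
  have hsum : ∀ n : ℕ,
      ∑ j ∈ Finset.range n, Real.Gamma (x + 1) * Real.Gamma (j + 1) / Real.Gamma (x + j + 1)
        = c 0 - c n := by
    intro n
    rw [← Finset.sum_range_sub' c n]
    exact Finset.sum_congr rfl fun j _ => hterm j
  have hc0 : c 0 = x / (x - 1) := by
    have : Real.Gamma (x + 1) = x * Real.Gamma x := Real.Gamma_add_one hx0.ne'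
    simp only [hc, Nat.cast_zero, add_zero, Nat.factorial_zero, Nat.cast_one, this]
    field_simp
  -- c n → 0
  have hczero : Tendsto c atTop (𝓝 0) := by
    have hlim : Tendsto (fun n : ℕ =>
        Real.Gamma (x + 1) / (x - 1) *
          (Real.GammaSeq x n * (x * (n : ℝ) ^ (-x) + (n : ℝ) ^ (-(x - 1))) * (Real.Gamma x)⁻¹))
        atTop (𝓝 (Real.Gamma (x + 1) / (x - 1) *
          (Real.Gamma x * (x * 0 + 0) * (Real.Gamma x)⁻¹))) := by
      refine Tendsto.const_mul _ (Tendsto.mul_const _ (Tendsto.mul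
        (Real.GammaSeq_tendsto_Gamma x) (Tendsto.add (Tendsto.const_mul _ ?_) ?_)))
      · exact (tendsto_rpow_neg_atTop hx0).comp tendsto_natCast_atTop_atTop
      · exact (tendsto_rpow_neg_atTop (by linarith)).comp tendsto_natCast_atTop_atTop
    simp only [mul_zero, add_zero, zero_mul, mul_zero] at hlim
    refine Tendsto.congr' ?_ hlim
    filter_upwards [eventually_ge_atTop 1] with n hn
    have hnpos : (0 : ℝ) < (n : ℝ) := by exact_mod_cast hn
    have hprod : Real.Gamma (x + n) = Real.Gamma x * ∏ j ∈ Finset.range n, (x + j) :=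
      gamma_add_nat_eq x hx0 n
    have hgs : Real.GammaSeq x n =
        (n : ℝ) ^ x * n ! / (Real.Gamma (x + n) / Real.Gamma x * (x + n)) := by
      rw [Real.GammaSeq, Finset.prod_range_succ, hprod]
      field_simp
    have hΓxn : 0 < Real.Gamma (x + n) := Real.Gamma_pos_of_pos (by positivity)
    have hxn : (0 : ℝ) < x + n := by positivity
    have hpowx : (0 : ℝ) < (n : ℝ) ^ x := Real.rpow_pos_of_pos hnpos x
    have hid : x * (n : ℝ) ^ (-x) + (n : ℝ) ^ (-(x - 1)) = (x + n) / (n : ℝ) ^ x := by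
      rw [Real.rpow_neg hnpos.le, show -(x - 1) = 1 + -x by ring,
        Real.rpow_add hnpos, Real.rpow_one, Real.rpow_neg hnpos.le]
      field_simp
    rw [hgs, hid, hc]
    field_simp
  have : Tendsto (fun n : ℕ => c 0 - c n) atTop (𝓝 (c 0 - 0)) :=
    tendsto_const_nhds.sub hczero
  rw [sub_zero] at this
  rw [← hc0]
  exact this.congr fun n => (hsum n).symm
end

section
/- For real q > 1, with c_k = -q·Γ(k+1)Γ(q+1)/Γ(q+k+2) for k ≥ 1, the series ∑_{k=1}^{∞} c_k/k converges and equals -q/(q+1)^2. -/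
theorem ck_over_k_sum (q : ℝ) (hq : 1 < q) :
    HasSum
      (fun k : ℕ =>
        (-q * Real.Gamma ((k : ℝ) + 2) * Real.Gamma (q + 1) / Real.Gamma (q + (k : ℝ) + 3))
          / ((k : ℝ) + 1))
      (-q / (q + 1) ^ 2) := by
  have hq0 : 0 < q := by linarith
  set b : ℕ → ℝ := fun k => Real.Gamma ((k : ℝ) + 1) / Real.Gamma (q + (k : ℝ) + 2) with hb
  have hGpos : ∀ k : ℕ, 0 < Real.Gamma ((k : ℝ) + 1) := fun k =>
    Real.Gamma_pos_of_pos (by positivity)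
  have hGqpos : ∀ x : ℝ, 0 < x → 0 < Real.Gamma x := fun x hx => Real.Gamma_pos_of_pos hx
  -- key identity: b k - b (k+1) = (q+1) * Γ(k+1)/Γ(q+k+3)
  have hrecG : ∀ k : ℕ, Real.Gamma ((k : ℝ) + 2) = ((k : ℝ) + 1) * Real.Gamma ((k : ℝ) + 1) := by
    intro k
    have := Real.Gamma_add_one ((by positivity : ((k:ℝ)+1) ≠ 0))
    rw [← this]; ring_nf
  have hrecQ : ∀ k : ℕ, Real.Gamma (q + (k : ℝ) + 3) =
      (q + (k : ℝ) + 2) * Real.Gamma (q + (k : ℝ) + 2) := by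
    intro k
    have := Real.Gamma_add_one ((by positivity : (q+(k:ℝ)+2) ≠ 0))
    rw [← this]; ring_nf
  have hkey : ∀ k : ℕ, b k - b (k + 1) =
      (q + 1) * (Real.Gamma ((k : ℝ) + 1) / Real.Gamma (q + (k : ℝ) + 3)) := by
    intro k
    have h1 : ((k : ℕ) + 1 : ℕ) = (k + 1 : ℕ) := rfl
    simp only [hb, Nat.cast_add, Nat.cast_one]
    have e1 : ((k : ℝ) + 1) + 1 = (k : ℝ) + 2 := by ring
    have e2 : q + ((k : ℝ) + 1) + 2 = q + (k : ℝ) + 3 := by ring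
    rw [e1, e2, hrecG k, hrecQ k]
    have hA := (hGqpos (q + (k : ℝ) + 2) (by positivity)).ne'
    have hB := (hGpos k).ne'
    field_simp
    ring
  -- telescoping sum
  have hnonneg : ∀ k : ℕ, 0 ≤ b k - b (k + 1) := by
    intro k
    rw [hkey k]
    have := (hGpos k).le
    have := (hGqpos (q + (k : ℝ) + 3) (by positivity)).le
    positivity
  have hb0 : ∀ n : ℕ, 0 ≤ b n := fun n =>
    le_of_lt (div_pos (hGpos n) (hGqpos _ (by positivity)))
  -- bound: b n ≤ 1/((n+1)(n+2)) so b → 0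
  have hbnd : ∀ n : ℕ, b n ≤ 1 / (((n : ℝ) + 1) * ((n : ℝ) + 2)) := by
    intro n
    have hmono : Real.Gamma ((n : ℝ) + 3) ≤ Real.Gamma (q + (n : ℝ) + 2) := by
      rcases eq_or_lt_of_le (by linarith : (n : ℝ) + 3 ≤ q + (n : ℝ) + 2) with h | h
      · rw [h]
      · have hn0 : (0:ℝ) ≤ (n:ℝ) := Nat.cast_nonneg n
        exact le_of_lt (Real.Gamma_strictMonoOn_Ici (Set.mem_Ici.mpr (by linarith))
          (Set.mem_Ici.mpr (by linarith)) h)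
    have hG3 : Real.Gamma ((n : ℝ) + 3) =
        ((n : ℝ) + 2) * (((n : ℝ) + 1) * Real.Gamma ((n : ℝ) + 1)) := by
      have h2 := Real.Gamma_add_one ((by positivity : ((n:ℝ)+2) ≠ 0))
      have h1 := Real.Gamma_add_one ((by positivity : ((n:ℝ)+1) ≠ 0))
      have e : (n : ℝ) + 2 + 1 = (n : ℝ) + 3 := by ring
      have e1 : (n:ℝ) + 1 + 1 = (n:ℝ) + 2 := by ring
      rw [e] at h2; rw [e1] at h1
      rw [h2, h1]
    have hpos3 : 0 < Real.Gamma ((n : ℝ) + 3) := hGqpos _ (by positivity)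
    calc b n ≤ Real.Gamma ((n : ℝ) + 1) / Real.Gamma ((n : ℝ) + 3) := by
          apply div_le_div_of_nonneg_left (hGpos n).le hpos3 hmono
      _ = 1 / (((n : ℝ) + 1) * ((n : ℝ) + 2)) := by
          rw [hG3]
          rw [eq_div_iff (by positivity)]
          field_simp
  have hbtend : Filter.Tendsto b Filter.atTop (nhds 0) := by
    apply squeeze_zero hb0 hbnd
    have h1 : Filter.Tendsto (fun n : ℕ => ((n : ℝ) + 1) * ((n : ℝ) + 2)) Filter.atTop
        Filter.atTop := by
      apply Filter.Tendsto.atTop_mul_atTop₀ <;>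
        exact Filter.tendsto_atTop_add_const_right _ _ tendsto_natCast_atTop_atTop
    refine h1.inv_tendsto_atTop.congr fun n => ?_
    simp [one_div]
  have htele : HasSum (fun k => b k - b (k + 1)) (b 0) := by
    rw [hasSum_iff_tendsto_nat_of_nonneg hnonneg]
    have : ∀ n : ℕ, ∑ i ∈ Finset.range n, (b i - b (i + 1)) = b 0 - b n := fun n =>
      Finset.sum_range_sub' b n
    simp_rw [this]
    simpa using (tendsto_const_nhds (x := b 0)).sub hbtend
  -- relate terms
  have hGq1 : 0 < Real.Gamma (q + 1) := hGqpos _ (by positivity)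
  have hC : HasSum (fun k => (-q * Real.Gamma (q + 1) / (q + 1)) * (b k - b (k + 1)))
      ((-q * Real.Gamma (q + 1) / (q + 1)) * b 0) := htele.mul_left _
  have heq : ∀ k : ℕ,
      (-q * Real.Gamma ((k : ℝ) + 2) * Real.Gamma (q + 1) / Real.Gamma (q + (k : ℝ) + 3))
        / ((k : ℝ) + 1) = (-q * Real.Gamma (q + 1) / (q + 1)) * (b k - b (k + 1)) := by
    intro k
    rw [hkey k, hrecG k]
    have hA := (hGqpos (q + (k : ℝ) + 3) (by positivity)).ne'
    field_simp
  have hval : (-q * Real.Gamma (q + 1) / (q + 1)) * b 0 = -q / (q + 1) ^ 2 := by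
    simp only [hb]
    have h0 : Real.Gamma ((0 : ℕ) + (1 : ℝ)) = 1 := by norm_num [Real.Gamma_one]
    have hq2 : Real.Gamma (q + (0 : ℕ) + 2) = (q + 1) * Real.Gamma (q + 1) := by
      have := Real.Gamma_add_one ((by positivity : (q+1) ≠ 0))
      have e : q + 1 + 1 = q + (0 : ℕ) + 2 := by push_cast; ring
      rw [e] at this
      rw [this]
    rw [h0, hq2]
    field_simp
  rw [← hval]
  exact hC.congr_fun heq
end

section
/- For real q > 0, with d_k = Γ(q+1)Γ(k+2)/Γ(q+k+2), the infinite series ∑_{k=0}^{∞} d_k/(k+1) converges and equals 1/q. -/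
open Filter Finset Real Topology

private lemma gamma_prod (q : ℝ) (hq : 0 < q) (n : ℕ) :
    Real.Gamma (q + n + 1) = Real.Gamma q * ∏ j ∈ Finset.range (n + 1), (q + j) := by
  induction n with
  | zero => simp [Real.Gamma_add_one hq.ne', mul_comm]
  | succ n ih =>
      have h1 : q + (n + 1 : ℕ) + 1 = (q + n + 1) + 1 := by push_cast; ring
      have h2 : q + n + 1 ≠ 0 := by positivity
      rw [Finset.prod_range_succ, h1, Real.Gamma_add_one h2, ih]
      push_cast
      ring

private lemma a_tendsto (q : ℝ) (hq : 0 < q) :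
    Tendsto (fun n : ℕ => Real.Gamma q * Real.Gamma ((n : ℝ) + 1) / Real.Gamma (q + n + 1))
      atTop (𝓝 0) := by
  have h1 : Tendsto (fun n : ℕ => Real.GammaSeq q n * (n : ℝ) ^ (-q)) atTop (𝓝 0) := by
    have := (Real.GammaSeq_tendsto_Gamma q).mul
      ((tendsto_rpow_neg_atTop hq).comp tendsto_natCast_atTop_atTop)
    simpa using this
  apply h1.congr'
  filter_upwards [eventually_ge_atTop 1] with n hn
  have hn0 : (0 : ℝ) < n := by exact_mod_cast hn
  have hprod : (0 : ℝ) < ∏ j ∈ Finset.range (n + 1), (q + j) := by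
    apply Finset.prod_pos; intro j _; positivity
  rw [Real.GammaSeq, gamma_prod q hq n, Real.Gamma_nat_eq_factorial n]
  rw [div_mul_eq_mul_div, mul_comm, ← mul_assoc, ← Real.rpow_add hn0]
  have hG : (0:ℝ) < Real.Gamma q := Real.Gamma_pos_of_pos hq
  field_simp
  ring
  simp

theorem dk_over_k_sum (q : ℝ) (hq : 0 < q) :
    HasSum
      (fun k : ℕ =>
        (Real.Gamma (q + 1) * Real.Gamma ((k : ℝ) + 2) / Real.Gamma (q + (k : ℝ) + 2))
          / ((k : ℝ) + 1))
      (1 / q) := by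
  set a : ℕ → ℝ := fun n => Real.Gamma q * Real.Gamma ((n : ℝ) + 1) / Real.Gamma (q + n + 1)
    with ha
  have hGpos : ∀ x : ℝ, 0 < x → 0 < Real.Gamma x := fun x hx => Real.Gamma_pos_of_pos hx
  have hterm : ∀ k : ℕ,
      (Real.Gamma (q + 1) * Real.Gamma ((k : ℝ) + 2) / Real.Gamma (q + (k : ℝ) + 2))
        / ((k : ℝ) + 1) = a k - a (k + 1) := by
    intro k
    have e1 : Real.Gamma (q + 1) = q * Real.Gamma q := Real.Gamma_add_one hq.ne'
    have e2 : Real.Gamma ((k : ℝ) + 2) = ((k : ℝ) + 1) * Real.Gamma ((k : ℝ) + 1) := by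
      have : ((k : ℝ) + 2) = ((k : ℝ) + 1) + 1 := by ring
      rw [this, Real.Gamma_add_one (by positivity)]
    have e3 : Real.Gamma (q + (k : ℝ) + 2) = (q + k + 1) * Real.Gamma (q + (k : ℝ) + 1) := by
      have : (q + (k : ℝ) + 2) = (q + (k : ℝ) + 1) + 1 := by rw [add_assoc]; ring
      rw [this, Real.Gamma_add_one (by positivity)]
    have e4 : a (k + 1) = Real.Gamma q * (((k : ℝ) + 1) * Real.Gamma ((k : ℝ) + 1))
        / ((q + k + 1) * Real.Gamma (q + (k : ℝ) + 1)) := by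
      simp only [ha]
      push_cast
      rw [show ((k : ℝ) + 1 + 1) = ((k : ℝ) + 1) + 1 from rfl,
        Real.Gamma_add_one (by positivity : ((k:ℝ)+1) ≠ 0),
        show (q + ((k : ℝ) + 1) + 1) = (q + (k : ℝ) + 1) + 1 by ring,
        Real.Gamma_add_one (by positivity : (q + (k:ℝ) + 1) ≠ 0)]
    rw [e4, e1, e2, e3, ha]
    have hGk : (0:ℝ) < Real.Gamma ((k : ℝ) + 1) := hGpos _ (by positivity)
    have hGqk : (0:ℝ) < Real.Gamma (q + (k : ℝ) + 1) := hGpos _ (by positivity)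
    have hk1 : ((k:ℝ) + 1) ≠ 0 := by positivity
    have hqk1 : (q + (k:ℝ) + 1) ≠ 0 := by positivity
    field_simp
    ring
  have hnn : ∀ k : ℕ,
      0 ≤ (Real.Gamma (q + 1) * Real.Gamma ((k : ℝ) + 2) / Real.Gamma (q + (k : ℝ) + 2))
        / ((k : ℝ) + 1) := by
    intro k
    have h1 := hGpos (q+1) (by positivity)
    have h2 := hGpos ((k:ℝ)+2) (by positivity)
    have h3 := hGpos (q+(k:ℝ)+2) (by positivity)
    positivity
  rw [hasSum_iff_tendsto_nat_of_nonneg hnn]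
  have hsum : ∀ n : ℕ, ∑ k ∈ Finset.range n,
      (Real.Gamma (q + 1) * Real.Gamma ((k : ℝ) + 2) / Real.Gamma (q + (k : ℝ) + 2))
        / ((k : ℝ) + 1) = a 0 - a n := by
    intro n
    rw [Finset.sum_congr rfl fun k _ => hterm k]
    exact Finset.sum_range_sub' a n
  have ha0 : a 0 = 1 / q := by
    simp only [ha, Nat.cast_zero, add_zero, zero_add, Real.Gamma_one, mul_one,
      Real.Gamma_add_one hq.ne']
    rw [mul_comm q]
    rw [div_eq_div_iff (by positivity) hq.ne']
    ring
  rw [← ha0]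
  exact Tendsto.congr (fun n => (hsum n).symm)
    (by simpa using (tendsto_const_nhds (x := a 0)).sub (a_tendsto q hq))
end

section
/- For real q > 1 and small h ∈ (0, 1/2), with u_1(w) = q·w·∑_{k=0}^∞ c_k w^k where c_0 = 1/(q+1) and c_k = -q·Γ(k+1)Γ(q+1)/Γ(q+k+2) for k ≥ 1, one has ∫_h^{1-h} u_1(w)/w² dw = -(q/(q+1))·log h - q²/(q+1)² + O(h) as h → 0. -/
open Asymptotics

namespace U1A

noncomputable def c (q : ℝ) (k : ℕ) : ℝ :=
  if k = 0 then 1 / (q + 1)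
  else -q * Real.Gamma ((k : ℝ) + 1) * Real.Gamma (q + 1) / Real.Gamma (q + (k : ℝ) + 2)

noncomputable def d (q : ℝ) (n : ℕ) : ℝ :=
  q * Real.Gamma ((n : ℝ) + 2) * Real.Gamma (q + 1) / Real.Gamma (q + (n : ℝ) + 3)

noncomputable def s (q : ℝ) (n : ℕ) : ℝ :=
  Real.Gamma ((n : ℝ) + 2) * Real.Gamma (q + 1) / Real.Gamma (q + (n : ℝ) + 2)

noncomputable def t (q : ℝ) (n : ℕ) : ℝ :=
  Real.Gamma ((n : ℝ) + 1) * Real.Gamma (q + 1) / Real.Gamma (q + (n : ℝ) + 2)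

noncomputable def e (q : ℝ) (n : ℕ) : ℝ :=
  Real.Gamma ((n : ℝ) + 1) * Real.Gamma (q + 1) / Real.Gamma (q + (n : ℝ) + 3)

variable {q : ℝ} (hq : 1 < q)

lemma c_succ (n : ℕ) : c q (n + 1) = -(d q n) := by
  simp only [c, d, Nat.succ_ne_zero, if_false]
  push_cast
  ring_nf

lemma gpos (x : ℝ) (hx : 0 < x) : 0 < Real.Gamma x := Real.Gamma_pos_of_pos hx

include hq

lemma d_pos (n : ℕ) : 0 < d q n := by
  have h1 : (0:ℝ) < (n:ℝ) + 2 := by positivity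
  have h2 : (0:ℝ) < q + 1 := by linarith
  have h3 : (0:ℝ) < q + (n:ℝ) + 3 := by positivity
  exact div_pos (mul_pos (mul_pos (by linarith) (gpos _ h1)) (gpos _ h2)) (gpos _ h3)

lemma d_eq (n : ℕ) : d q n = s q n - s q (n + 1) := by
  have h3 : (0:ℝ) < q + (n:ℝ) + 2 := by positivity
  have hg3 : Real.Gamma (q + (n:ℝ) + 3) = (q + n + 2) * Real.Gamma (q + n + 2) := by
    have := Real.Gamma_add_one (s := q + (n:ℝ) + 2) (by positivity)
    rw [show q + (n:ℝ) + 2 + 1 = q + (n:ℝ) + 3 by ring] at this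
    exact this
  have hgn : Real.Gamma ((n:ℝ) + 3) = ((n:ℝ) + 2) * Real.Gamma ((n:ℝ) + 2) := by
    have := Real.Gamma_add_one (s := (n:ℝ) + 2) (by positivity)
    rw [show (n:ℝ) + 2 + 1 = (n:ℝ) + 3 by ring] at this
    exact this
  have hne2 : Real.Gamma (q + (n:ℝ) + 2) ≠ 0 := (gpos _ h3).ne'
  simp only [d, s, Nat.cast_add, Nat.cast_one]
  rw [show (n:ℝ) + 1 + 2 = (n:ℝ) + 3 by ring, show q + ((n:ℝ) + 1) + 2 = q + (n:ℝ) + 3 by ring,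
    hg3, hgn]
  field_simp
  ring

lemma e_eq (n : ℕ) : (q + 1) * e q n = t q n - t q (n + 1) := by
  have h3 : (0:ℝ) < q + (n:ℝ) + 2 := by positivity
  have hg3 : Real.Gamma (q + (n:ℝ) + 3) = (q + n + 2) * Real.Gamma (q + n + 2) := by
    have := Real.Gamma_add_one (s := q + (n:ℝ) + 2) (by positivity)
    rw [show q + (n:ℝ) + 2 + 1 = q + (n:ℝ) + 3 by ring] at this
    exact this
  have hgn : Real.Gamma ((n:ℝ) + 2) = ((n:ℝ) + 1) * Real.Gamma ((n:ℝ) + 1) := by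
    have := Real.Gamma_add_one (s := (n:ℝ) + 1) (by positivity)
    rw [show (n:ℝ) + 1 + 1 = (n:ℝ) + 2 by ring] at this
    exact this
  have hne2 : Real.Gamma (q + (n:ℝ) + 2) ≠ 0 := (gpos _ h3).ne'
  simp only [e, t, Nat.cast_add, Nat.cast_one]
  rw [show (n:ℝ) + 1 + 1 = (n:ℝ) + 2 by ring, show q + ((n:ℝ) + 1) + 2 = q + (n:ℝ) + 3 by ring,
    hg3, hgn]
  field_simp
  ring

lemma s_zero : s q 0 = 1 / (q + 1) := by
  have hg : Real.Gamma (q + 2) = (q + 1) * Real.Gamma (q + 1) := by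
    have := Real.Gamma_add_one (s := q + 1) (by positivity)
    rw [show q + 1 + 1 = q + 2 by ring] at this
    exact this
  have : Real.Gamma (q + 1) ≠ 0 := (gpos _ (by linarith)).ne'
  simp only [s, Nat.cast_zero]
  rw [show (0:ℝ) + 2 = 2 by ring, show q + 0 + 2 = q + 2 by ring, Real.Gamma_two, hg]
  field_simp

lemma t_zero : t q 0 = 1 / (q + 1) := by
  have hg : Real.Gamma (q + 2) = (q + 1) * Real.Gamma (q + 1) := by
    have := Real.Gamma_add_one (s := q + 1) (by positivity)
    rw [show q + 1 + 1 = q + 2 by ring] at this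
    exact this
  have : Real.Gamma (q + 1) ≠ 0 := (gpos _ (by linarith)).ne'
  simp only [t, Nat.cast_zero]
  rw [show (0:ℝ) + 1 = 1 by ring, show q + 0 + 2 = q + 2 by ring, Real.Gamma_one, hg]
  field_simp

lemma s_nonneg (n : ℕ) : 0 ≤ s q n := by
  have h1 := gpos ((n:ℝ) + 2) (by positivity)
  have h2 := gpos (q + 1) (by linarith)
  have h3 := gpos (q + (n:ℝ) + 2) (by positivity)
  exact le_of_lt (by unfold s; positivity)

lemma t_nonneg (n : ℕ) : 0 ≤ t q n := by
  have h1 := gpos ((n:ℝ) + 1) (by positivity)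
  have h2 := gpos (q + 1) (by linarith)
  have h3 := gpos (q + (n:ℝ) + 2) (by positivity)
  exact le_of_lt (by unfold t; positivity)

lemma sum_d_le (n : ℕ) : ∑ i ∈ Finset.range n, d q i ≤ 1 / (q + 1) := by
  have : ∑ i ∈ Finset.range n, d q i = s q 0 - s q n := by
    rw [← Finset.sum_range_sub' (s q) n]
    exact Finset.sum_congr rfl fun i _ => d_eq hq i
  rw [this, s_zero hq]
  have := s_nonneg hq n
  linarith

lemma summable_d : Summable (d q) :=
  summable_of_sum_range_le (fun n => (d_pos hq n).le) (sum_d_le hq)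

lemma t_le (n : ℕ) : t q n ≤ s q 0 := by
  have hsum : ∑ i ∈ Finset.range n, d q i = s q 0 - s q n := by
    rw [← Finset.sum_range_sub' (s q) n]
    exact Finset.sum_congr rfl fun i _ => d_eq hq i
  have hsn : s q n ≤ s q 0 := by
    have h0 : 0 ≤ ∑ i ∈ Finset.range n, d q i :=
      Finset.sum_nonneg fun i _ => (d_pos hq i).le
    linarith [hsum]
  have hts : t q n ≤ s q n := by
    have hg : Real.Gamma ((n:ℝ) + 2) = ((n:ℝ) + 1) * Real.Gamma ((n:ℝ) + 1) := by
      have := Real.Gamma_add_one (s := (n:ℝ) + 1) (by positivity)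
      rw [show (n:ℝ) + 1 + 1 = (n:ℝ) + 2 by ring] at this
      exact this
    simp only [t, s, hg]
    have h3 : (0:ℝ) < Real.Gamma (q + (n:ℝ) + 2) := gpos _ (by positivity)
    have h1 : (0:ℝ) < Real.Gamma ((n:ℝ) + 1) := gpos _ (by positivity)
    have h2 : (0:ℝ) < Real.Gamma (q + 1) := gpos _ (by linarith)
    rw [div_le_div_iff₀ h3 h3]
    have hp : (0:ℝ) < Real.Gamma ((n:ℝ)+1) * Real.Gamma (q+1) * Real.Gamma (q + (n:ℝ)+2) := by
      positivity
    have hn : (0:ℝ) ≤ (n:ℝ) := Nat.cast_nonneg n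
    nlinarith [mul_nonneg hn hp.le]
  linarith

lemma t_tendsto : Filter.Tendsto (t q) Filter.atTop (nhds 0) := by
  -- t n = s n / (n+1) ≤ s0/(n+1); squeeze
  have hub : ∀ n : ℕ, t q n ≤ s q 0 / ((n:ℝ) + 1) := by
    intro n
    have hg : Real.Gamma ((n:ℝ) + 2) = ((n:ℝ) + 1) * Real.Gamma ((n:ℝ) + 1) := by
      have := Real.Gamma_add_one (s := (n:ℝ) + 1) (by positivity)
      rw [show (n:ℝ) + 1 + 1 = (n:ℝ) + 2 by ring] at this
      exact this
    have hts : t q n = s q n / ((n:ℝ) + 1) := by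
      have hne : Real.Gamma (q+(n:ℝ)+2) ≠ 0 := (gpos _ (by positivity)).ne'
      have hn1 : ((n:ℝ)+1) ≠ 0 := by positivity
      simp only [t, s, hg]
      field_simp
    rw [hts]
    have hsn : s q n ≤ s q 0 := by
      have hsum : ∑ i ∈ Finset.range n, d q i = s q 0 - s q n := by
        rw [← Finset.sum_range_sub' (s q) n]
        exact Finset.sum_congr rfl fun i _ => d_eq hq i
      have h0 : 0 ≤ ∑ i ∈ Finset.range n, d q i :=
        Finset.sum_nonneg fun i _ => (d_pos hq i).le
      linarith
    gcongr
  have hlim : Filter.Tendsto (fun n : ℕ => s q 0 / ((n:ℝ) + 1)) Filter.atTop (nhds 0) := by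
    apply Filter.Tendsto.div_atTop (a := s q 0) tendsto_const_nhds
    exact Filter.tendsto_atTop_add_const_right _ 1 tendsto_natCast_atTop_atTop
  exact squeeze_zero (t_nonneg hq) hub hlim

lemma hasSum_e : HasSum (e q) (1 / (q + 1) ^ 2) := by
  have hq1 : (0:ℝ) < q + 1 := by linarith
  have he_nonneg : ∀ n, 0 ≤ e q n := by
    intro n
    have h1 : (0:ℝ) < (n:ℝ) + 1 := by positivity
    have h3 : (0:ℝ) < q + (n:ℝ) + 3 := by positivity
    have := gpos ((n:ℝ)+1) h1
    have := gpos (q+1) hq1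
    have := gpos (q+(n:ℝ)+3) h3
    simp only [e]; positivity
  -- telescoping partial sums
  have htel : ∀ n, ∑ i ∈ Finset.range n, e q i = (t q 0 - t q n) / (q + 1) := by
    intro n
    have : ∑ i ∈ Finset.range n, (q + 1) * e q i = t q 0 - t q n := by
      rw [← Finset.sum_range_sub' (t q) n]
      exact Finset.sum_congr rfl fun i _ => e_eq hq i
    rw [← Finset.mul_sum] at this
    field_simp at this ⊢
    linarith [this]
  have hsummable : Summable (e q) := by
    apply summable_of_sum_range_le he_nonneg (c := t q 0 / (q + 1))
    intro n
    rw [htel n]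
    have := t_nonneg hq n
    gcongr
    linarith
  have hpart : Filter.Tendsto (fun n => ∑ i ∈ Finset.range n, e q i)
      Filter.atTop (nhds (1 / (q + 1) ^ 2)) := by
    have : Filter.Tendsto (fun n => (t q 0 - t q n) / (q + 1)) Filter.atTop
        (nhds ((t q 0 - 0) / (q + 1))) := by
      exact (Filter.Tendsto.sub tendsto_const_nhds (t_tendsto hq)).div_const _
    have heq : (t q 0 - 0) / (q + 1) = 1 / (q+1)^2 := by
      rw [t_zero hq]; field_simp; ring
    rw [heq] at this
    exact (Filter.Tendsto.congr (fun n => (htel n).symm)) this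
  have h3 := hsummable.hasSum
  have h4 := tendsto_nhds_unique h3.tendsto_sum_nat hpart
  rwa [h4] at h3


noncomputable def F (q x : ℝ) : ℝ := ∑' n : ℕ, c q (n + 1) * x ^ (n + 1) / ((n : ℝ) + 1)

noncomputable def G (q x : ℝ) : ℝ := ∑' n : ℕ, c q (n + 1) * x ^ n

lemma abs_c_succ (n : ℕ) : |c q (n + 1)| = d q n := by
  rw [c_succ, abs_neg, abs_of_pos (d_pos hq n)]

lemma summable_shift {x : ℝ} (hx : |x| ≤ 1) :
    Summable (fun n : ℕ => c q (n + 1) * x ^ (n + 1)) := by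
  apply Summable.of_norm_bounded (summable_d hq)
  intro n
  rw [Real.norm_eq_abs, abs_mul, abs_c_succ hq, abs_pow]
  have h1 : |x| ^ (n + 1) ≤ 1 := pow_le_one₀ (abs_nonneg x) hx
  nlinarith [d_pos hq n, pow_nonneg (abs_nonneg x) (n + 1)]

lemma summable_shift' {x : ℝ} (hx : |x| ≤ 1) :
    Summable (fun n : ℕ => c q (n + 1) * x ^ (n + 1) / ((n : ℝ) + 1)) := by
  apply Summable.of_norm_bounded (summable_d hq)
  intro n
  rw [Real.norm_eq_abs, abs_div, abs_mul, abs_c_succ hq, abs_pow]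
  have h1 : |x| ^ (n + 1) ≤ 1 := pow_le_one₀ (abs_nonneg x) hx
  have h2 : (1:ℝ) ≤ |(n:ℝ) + 1| := by
    rw [abs_of_pos (by positivity)]; simp
  have h3 := d_pos hq n
  rw [div_le_iff₀ (lt_of_lt_of_le one_pos h2)]
  nlinarith [pow_nonneg (abs_nonneg x) (n + 1)]

lemma hasDerivAt_F {x : ℝ} (hx : x ∈ Set.Ioo (-1 : ℝ) 1) :
    HasDerivAt (F q) (G q x) x := by
  show HasDerivAt (fun y : ℝ => ∑' n : ℕ, c q (n + 1) * y ^ (n + 1) / ((n : ℝ) + 1))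
    (∑' n : ℕ, c q (n + 1) * x ^ n) x
  apply hasDerivAt_tsum_of_isPreconnected
    (g := fun (n : ℕ) (y : ℝ) => c q (n + 1) * y ^ (n + 1) / ((n : ℝ) + 1))
    (g' := fun (n : ℕ) (y : ℝ) => c q (n + 1) * y ^ n)
    (u := d q) (summable_d hq) isOpen_Ioo isPreconnected_Ioo (y₀ := 0)
  · intro n y _
    have hp := hasDerivAt_pow (n + 1) y
    have h2 := (hp.div_const ((n : ℝ) + 1)).const_mul (c q (n + 1))
    have heq : (fun y : ℝ => c q (n + 1) * y ^ (n + 1) / ((n : ℝ) + 1))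
        = fun y : ℝ => c q (n + 1) * (y ^ (n + 1) / ((n : ℝ) + 1)) := by
      funext z; ring
    rw [heq]
    convert h2 using 1
    case e'_4 => rfl
    all_goals
      have hne : ((n : ℝ) + 1) ≠ 0 := by positivity
      push_cast
      field_simp
  · intro n y hy
    rw [Real.norm_eq_abs, abs_mul, abs_c_succ hq, abs_pow]
    have hy1 : |y| ≤ 1 := by
      rw [abs_le]; exact ⟨hy.1.le, hy.2.le⟩
    have h1 : |y| ^ n ≤ 1 := pow_le_one₀ (abs_nonneg y) hy1
    nlinarith [d_pos hq n, pow_nonneg (abs_nonneg y) n]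
  · exact ⟨by norm_num, by norm_num⟩
  · have hz : (fun n : ℕ => c q (n+1) * (0:ℝ) ^ (n+1) / ((n:ℝ)+1)) = fun _ => (0:ℝ) := by
      funext n; simp
    rw [hz]
    exact summable_zero
  · exact hx

lemma F_one : F q 1 = -q / (q + 1) ^ 2 := by
  have hterm : ∀ n : ℕ, c q (n + 1) * (1:ℝ) ^ (n + 1) / ((n : ℝ) + 1) = -q * e q n := by
    intro n
    have hg : Real.Gamma ((n:ℝ) + 2) = ((n:ℝ) + 1) * Real.Gamma ((n:ℝ) + 1) := by
      have := Real.Gamma_add_one (s := (n:ℝ) + 1) (by positivity)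
      rw [show (n:ℝ) + 1 + 1 = (n:ℝ) + 2 by ring] at this
      exact this
    rw [c_succ, one_pow, mul_one]
    simp only [d, e, hg]
    have hn : ((n:ℝ) + 1) ≠ 0 := by positivity
    field_simp
  have : F q 1 = ∑' n : ℕ, -q * e q n := by
    unfold F
    exact tsum_congr hterm
  rw [this, tsum_mul_left, (hasSum_e hq).tsum_eq]
  field_simp

omit hq in
lemma abs_tsum_le {f g : ℕ → ℝ} (hg : Summable g) (h : ∀ n, |f n| ≤ g n) :
    |∑' n, f n| ≤ ∑' n, g n := by
  have hf : Summable f := by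
    apply Summable.of_norm_bounded hg
    intro n; rw [Real.norm_eq_abs]; exact h n
  have habs : Summable (fun n => |f n|) := by
    apply Summable.of_nonneg_of_le (fun n => abs_nonneg _) h hg
  have hnorm : Summable (fun n => ‖f n‖) := by
    simpa only [Real.norm_eq_abs] using habs
  have h1 : ‖∑' n, f n‖ ≤ ∑' n, ‖f n‖ := norm_tsum_le_tsum_norm hnorm
  rw [Real.norm_eq_abs] at h1
  have h2 : (∑' n, ‖f n‖) = ∑' n, |f n| := by
    simp only [Real.norm_eq_abs]
  rw [h2] at h1
  exact h1.trans (Summable.tsum_le_tsum h habs hg)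

lemma F_bound_zero {h : ℝ} (hh : h ∈ Set.Icc (0:ℝ) 1) :
    |F q h| ≤ (∑' n, d q n) * h := by
  obtain ⟨h0, h1⟩ := hh
  have hterm : ∀ n : ℕ, |c q (n+1) * h ^ (n+1) / ((n:ℝ)+1)| ≤ d q n * h := by
    intro n
    have hnn : (0:ℝ) < (n:ℝ)+1 := by positivity
    rw [abs_div, abs_mul, abs_c_succ hq, abs_pow, abs_of_nonneg h0, abs_of_pos hnn]
    have hpow : h ^ (n+1) ≤ h := by
      have hp := pow_le_one₀ h0 h1 (n := n)
      calc h ^ (n+1) = h * h ^ n := by ring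
        _ ≤ h * 1 := by nlinarith [pow_nonneg h0 n]
        _ = h := by ring
    have hd := d_pos hq n
    rw [div_le_iff₀ hnn]
    nlinarith [mul_le_mul_of_nonneg_left hpow hd.le,
      mul_nonneg (mul_nonneg hd.le h0) (Nat.cast_nonneg (α := ℝ) n)]
  have key := abs_tsum_le (f := fun n : ℕ => c q (n+1) * h ^ (n+1) / ((n:ℝ)+1))
    (g := fun n : ℕ => d q n * h) ((summable_d hq).mul_right h) hterm
  rw [tsum_mul_right] at key
  exact key

lemma F_bound_one {h : ℝ} (hh : h ∈ Set.Icc (0:ℝ) 1) :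
    |F q 1 - F q (1 - h)| ≤ (∑' n, d q n) * h := by
  obtain ⟨h0, h1⟩ := hh
  have hsub : (0:ℝ) ≤ 1 - h := by linarith
  have hsub1 : |(1:ℝ) - h| ≤ 1 := by rw [abs_of_nonneg hsub]; linarith
  have hs1 : Summable (fun n : ℕ => c q (n+1) * (1:ℝ) ^ (n+1) / ((n:ℝ)+1)) :=
    summable_shift' hq (by norm_num)
  have hs2 : Summable (fun n : ℕ => c q (n+1) * (1-h) ^ (n+1) / ((n:ℝ)+1)) :=
    summable_shift' hq hsub1
  have hdiff : F q 1 - F q (1 - h)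
      = ∑' n : ℕ, (c q (n+1) * (1:ℝ) ^ (n+1) / ((n:ℝ)+1)
          - c q (n+1) * (1-h) ^ (n+1) / ((n:ℝ)+1)) := by
    unfold F
    exact (Summable.tsum_sub hs1 hs2).symm
  have hterm : ∀ n : ℕ, |c q (n+1) * (1:ℝ) ^ (n+1) / ((n:ℝ)+1)
      - c q (n+1) * (1-h) ^ (n+1) / ((n:ℝ)+1)| ≤ d q n * h := by
    intro n
    have hnn : (0:ℝ) < (n:ℝ)+1 := by positivity
    have hpl : (1-h) ^ (n+1) ≤ 1 := pow_le_one₀ hsub (by linarith)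
    have hber : 1 - ((n:ℝ)+1) * h ≤ (1-h) ^ (n+1) := by
      have hb := one_add_mul_le_pow (a := -h) (by linarith) (n+1)
      push_cast at hb
      calc 1 - ((n:ℝ)+1) * h = 1 + ((n:ℝ)+1) * (-h) := by ring
        _ ≤ (1 + -h) ^ (n+1) := hb
        _ = (1-h) ^ (n+1) := by ring_nf
    have heq : c q (n+1) * (1:ℝ) ^ (n+1) / ((n:ℝ)+1) - c q (n+1) * (1-h) ^ (n+1) / ((n:ℝ)+1)
        = c q (n+1) * ((1 - (1-h) ^ (n+1)) / ((n:ℝ)+1)) := by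
      field_simp
      ring
    rw [heq, abs_mul, abs_c_succ hq]
    have hfr : |(1 - (1-h) ^ (n+1)) / ((n:ℝ)+1)| ≤ h := by
      rw [abs_div, abs_of_pos hnn, abs_of_nonneg (by linarith : (0:ℝ) ≤ 1 - (1-h)^(n+1))]
      rw [div_le_iff₀ hnn]
      nlinarith
    have hd := d_pos hq n
    exact mul_le_mul_of_nonneg_left hfr hd.le
  rw [hdiff]
  have key := abs_tsum_le (f := fun n : ℕ => c q (n+1) * (1:ℝ) ^ (n+1) / ((n:ℝ)+1)
      - c q (n+1) * (1-h) ^ (n+1) / ((n:ℝ)+1))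
    (g := fun n : ℕ => d q n * h) ((summable_d hq).mul_right h) hterm
  rw [tsum_mul_right] at key
  exact key

lemma continuousOn_G : ContinuousOn (G q) (Set.Icc (0:ℝ) 1) := by
  apply continuousOn_tsum (u := d q)
  · intro i
    exact (continuous_const.mul (continuous_pow i)).continuousOn
  · exact summable_d hq
  · intro n x hx
    rw [Real.norm_eq_abs, abs_mul, abs_c_succ hq, abs_pow]
    have hx1 : |x| ≤ 1 := by rw [abs_le]; constructor <;> [linarith [hx.1]; exact hx.2]
    have h1 : |x| ^ n ≤ 1 := pow_le_one₀ (abs_nonneg x) hx1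
    nlinarith [d_pos hq n, pow_nonneg (abs_nonneg x) n]


lemma key {h : ℝ} (h0 : 0 < h) (h4 : h < 1/4) :
    (∫ w in h..(1 - h),
        (q * w * ∑' k : ℕ,
          (if k = 0 then 1 / (q + 1)
            else -q * Real.Gamma ((k : ℝ) + 1) * Real.Gamma (q + 1)
              / Real.Gamma (q + (k : ℝ) + 2)) * w ^ k) / w ^ 2)
      = q / (q + 1) * (Real.log (1 - h) - Real.log h)
        + q * (F q (1 - h) - F q h) := by
  have hle : h ≤ 1 - h := by linarith
  have hq1 : (0:ℝ) < q + 1 := by linarith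
  have hq0 : (0:ℝ) < q := by linarith
  have huIcc : Set.uIcc h (1 - h) = Set.Icc h (1 - h) := Set.uIcc_of_le hle
  have hint : Set.EqOn
      (fun w : ℝ => (q * w * ∑' k : ℕ,
          (if k = 0 then 1 / (q + 1)
            else -q * Real.Gamma ((k : ℝ) + 1) * Real.Gamma (q + 1)
              / Real.Gamma (q + (k : ℝ) + 2)) * w ^ k) / w ^ 2)
      (fun w : ℝ => q / (q + 1) * w⁻¹ + q * G q w) (Set.uIcc h (1 - h)) := by
    intro w hw
    rw [huIcc] at hw
    have hw0 : 0 < w := lt_of_lt_of_le h0 hw.1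
    have hw1 : w ≤ 1 := le_trans hw.2 (by linarith)
    have habs : |w| ≤ 1 := by rw [abs_of_pos hw0]; exact hw1
    have hsum : Summable (fun k : ℕ => c q k * w ^ k) :=
      (summable_nat_add_iff 1).mp (summable_shift hq habs)
    have hzero : ∑' k : ℕ, c q k * w ^ k
        = c q 0 * w ^ 0 + ∑' n : ℕ, c q (n+1) * w ^ (n+1) := Summable.tsum_eq_zero_add hsum
    have hshift : ∑' n : ℕ, c q (n+1) * w ^ (n+1) = w * G q w := by
      unfold G
      rw [← tsum_mul_left]
      exact tsum_congr fun n => by ring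
    show (q * w * ∑' k : ℕ, c q k * w ^ k) / w ^ 2 = _
    rw [hzero, hshift]
    have hc0 : c q 0 = 1 / (q+1) := by simp [c]
    rw [hc0]
    have hw0' : w ≠ 0 := hw0.ne'
    field_simp
  rw [intervalIntegral.integral_congr hint]
  have hGc : ContinuousOn (fun w : ℝ => q / (q+1) * w⁻¹ + q * G q w)
      (Set.uIcc h (1-h)) := by
    apply ContinuousOn.add
    · apply ContinuousOn.mul continuousOn_const
      apply ContinuousOn.inv₀ continuousOn_id
      intro x hx
      rw [huIcc] at hx
      exact (lt_of_lt_of_le h0 hx.1).ne'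
    · apply continuousOn_const.mul
      apply (continuousOn_G hq).mono
      rw [huIcc]
      intro x hx
      exact ⟨le_trans h0.le hx.1, le_trans hx.2 (by linarith)⟩
  have hderiv : ∀ x ∈ Set.uIcc h (1-h),
      HasDerivAt (fun w => q/(q+1) * Real.log w + q * F q w)
        (q/(q+1) * x⁻¹ + q * G q x) x := by
    intro x hx
    rw [huIcc] at hx
    have hx0 : 0 < x := lt_of_lt_of_le h0 hx.1
    have hx1 : x < 1 := lt_of_le_of_lt hx.2 (by linarith)
    have hlog := (Real.hasDerivAt_log hx0.ne').const_mul (q/(q+1))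
    have hF := (hasDerivAt_F hq ⟨by linarith, hx1⟩).const_mul q
    exact hlog.add hF
  rw [intervalIntegral.integral_eq_sub_of_hasDerivAt hderiv hGc.intervalIntegrable]
  ring

omit hq in
lemma habc (a b c : ℝ) : |a - b - c| ≤ |a| + |b| + |c| := by
  have h1 : a - b - c = a + (-b) + (-c) := by ring
  rw [h1]
  calc |a + (-b) + (-c)| ≤ |a + (-b)| + |(-c)| := abs_add_le _ _
    _ ≤ |a| + |(-b)| + |(-c)| := by linarith [abs_add_le a (-b)]
    _ = |a| + |b| + |c| := by rw [abs_neg, abs_neg]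

end U1A

theorem integral_u1_asymptotics (q : ℝ) (hq : 1 < q) :
    (fun h : ℝ =>
        (∫ w in h..(1 - h),
          (q * w * ∑' k : ℕ,
            (if k = 0 then 1 / (q + 1)
              else -q * Real.Gamma ((k : ℝ) + 1) * Real.Gamma (q + 1)
                / Real.Gamma (q + (k : ℝ) + 2)) * w ^ k) / w ^ 2)
          - (-(q / (q + 1)) * Real.log h - q ^ 2 / (q + 1) ^ 2))
      =O[nhdsWithin 0 (Set.Ioi 0)] (fun h : ℝ => h) := by
  rw [Asymptotics.isBigO_iff]
  refine ⟨2 * q / (q + 1) + 2 * q * (∑' n : ℕ, U1A.d q n), ?_⟩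
  have hmem : Set.Ioo (0:ℝ) (1/4) ∈ nhdsWithin 0 (Set.Ioi 0) :=
    Ioo_mem_nhdsGT_of_mem (by norm_num : (0:ℝ) ∈ Set.Ico (0:ℝ) (1/4))
  filter_upwards [hmem] with h hh
  obtain ⟨h0, h4⟩ := hh
  have hq1 : (0:ℝ) < q + 1 := by linarith
  have hq0 : (0:ℝ) < q := by linarith
  have hM0 : 0 ≤ ∑' n : ℕ, U1A.d q n := tsum_nonneg fun n => (U1A.d_pos hq n).le
  rw [U1A.key hq h0 h4]
  have hF1 := U1A.F_one hq
  have hrw : q/(q+1) * (Real.log (1-h) - Real.log h) + q * (U1A.F q (1-h) - U1A.F q h)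
      - (-(q / (q + 1)) * Real.log h - q ^ 2 / (q + 1) ^ 2)
      = q/(q+1) * Real.log (1-h) - q * (U1A.F q 1 - U1A.F q (1-h)) - q * U1A.F q h := by
    have hv : q^2/(q+1)^2 = -(q * U1A.F q 1) := by
      rw [hF1]; field_simp
    rw [hv]; ring
  rw [hrw]
  have hIcc : h ∈ Set.Icc (0:ℝ) 1 := ⟨h0.le, by linarith⟩
  have hb1 := U1A.F_bound_one hq hIcc
  have hb0 := U1A.F_bound_zero hq hIcc
  have h1h : (0:ℝ) < 1 - h := by linarith
  have hlog : |Real.log (1-h)| ≤ 2*h := by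
    have hl1 : Real.log (1-h) ≤ 0 := Real.log_nonpos (by linarith) (by linarith)
    rw [abs_of_nonpos hl1, ← Real.log_inv]
    have hle2 : Real.log (1-h)⁻¹ ≤ (1-h)⁻¹ - 1 :=
      Real.log_le_sub_one_of_pos (by positivity)
    have hfin : (1-h)⁻¹ - 1 ≤ 2*h := by
      rw [sub_le_iff_le_add, inv_eq_one_div, div_le_iff₀ h1h]
      nlinarith
    linarith
  rw [Real.norm_eq_abs, Real.norm_eq_abs, abs_of_pos h0]
  have e1 : |q/(q+1) * Real.log (1-h)| ≤ q/(q+1) * (2*h) := by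
    rw [abs_mul, abs_of_pos (div_pos hq0 hq1)]
    exact mul_le_mul_of_nonneg_left hlog (div_pos hq0 hq1).le
  have e2 : |q * (U1A.F q 1 - U1A.F q (1-h))| ≤ q * ((∑' n : ℕ, U1A.d q n) * h) := by
    rw [abs_mul, abs_of_pos hq0]
    exact mul_le_mul_of_nonneg_left hb1 hq0.le
  have e3 : |q * U1A.F q h| ≤ q * ((∑' n : ℕ, U1A.d q n) * h) := by
    rw [abs_mul, abs_of_pos hq0]
    exact mul_le_mul_of_nonneg_left hb0 hq0.le
  calc |q/(q+1) * Real.log (1-h) - q * (U1A.F q 1 - U1A.F q (1-h)) - q * U1A.F q h|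
      ≤ |q/(q+1) * Real.log (1-h)| + |q * (U1A.F q 1 - U1A.F q (1-h))| + |q * U1A.F q h| :=
        U1A.habc _ _ _
    _ ≤ q/(q+1) * (2*h) + q * ((∑' n : ℕ, U1A.d q n) * h)
        + q * ((∑' n : ℕ, U1A.d q n) * h) := by linarith
    _ = (2 * q / (q + 1) + 2 * q * (∑' n : ℕ, U1A.d q n)) * h := by ring
end
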